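/- Every unreliable protocol is shadow-permitting: for every protocol P, if the fairness condition of P is eventual and ensures activity also with respect to the unreliable step relation, then the unreliable protocol corresponding to P is shadow-permitting, i.e. for every configuration C there is a fair execution of the unreliable protocol starting from C that has a shadow extension around every agent of C. -/

import Mathlib

open scoped Classical

/-- A configuration: finitely many agents (identified by natural numbers) with states in `Q`,
and finitely many packets (identified by natural numbers) carrying messages in `M`.
`agentState a = none` means `a` is not an agent of the configuration, and similarly
`packetMsg p = none` means `p` is not a packet of the configuration. -/
structure Config (Q : Type) (M : Type) where
  agentState : ℕ → Option Q
  packetMsg : ℕ → Option M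
  finAgents : {a : ℕ | agentState a ≠ none}.Finite
  finPackets : {p : ℕ | packetMsg p ≠ none}.Finite

namespace Config

variable {Q M : Type}

/-- The set `Dom(C_A)` of agents of a configuration. -/
def agentsDom (C : Config Q M) : Set ℕ := {a | C.agentState a ≠ none}

/-- The set `Dom(C_P)` of packets of a configuration. -/
def packetsDom (C : Config Q M) : Set ℕ := {p | C.packetMsg p ≠ none}

/-- Update (add, change or remove) the state of agent `a`. -/
def setAgent (C : Config Q M) (a : ℕ) (s : Option Q) : Config Q M where
  agentState := Function.update C.agentState a s
  packetMsg := C.packetMsg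
  finAgents := by
    apply Set.Finite.subset (C.finAgents.union (Set.finite_singleton a))
    intro x hx
    rcases eq_or_ne x a with h | h
    · exact Or.inr h
    · exact Or.inl (by simpa [Function.update, h] using hx)
  finPackets := C.finPackets

/-- Update (add, change or remove) the content of packet `p`. -/
def setPacket (C : Config Q M) (p : ℕ) (m : Option M) : Config Q M where
  agentState := C.agentState
  packetMsg := Function.update C.packetMsg p m
  finAgents := C.finAgents
  finPackets := by
    apply Set.Finite.subset (C.finPackets.union (Set.finite_singleton p))
    intro x hx
    rcases eq_or_ne x p with h | h
    · exact Or.inr h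
    · exact Or.inl (by simpa [Function.update, h] using hx)

/-- Rename agents and packets by permutations of `ℕ`:
the agent `a` of the result is in the state of agent `πA a` of `C`. -/
def rename (C : Config Q M) (πA πP : Equiv.Perm ℕ) : Config Q M where
  agentState := fun a => C.agentState (πA a)
  packetMsg := fun p => C.packetMsg (πP p)
  finAgents := by
    have h : {a : ℕ | C.agentState (πA a) ≠ none} = πA ⁻¹' C.agentsDom := rfl
    rw [h]
    exact C.finAgents.preimage πA.injective.injOn
  finPackets := by
    have h : {p : ℕ | C.packetMsg (πP p) ≠ none} = πP ⁻¹' C.packetsDom := rfl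
    rw [h]
    exact C.finPackets.preimage πP.injective.injOn

/-- The number of agents of `C` in state `q`. -/
noncomputable def numInState (C : Config Q M) (q : Q) : ℕ :=
  {a | C.agentState a = some q}.ncard

/-- The number of packets of `C` carrying message `m` (the supply of `m` in `C`). -/
noncomputable def supply (C : Config Q M) (m : M) : ℕ :=
  {p | C.packetMsg p = some m}.ncard

end Config

/-- The type of step relations: `Step C A C'` states that there is a step
from `C` to `C'` whose set of active agents is `A`. -/
abbrev StepRel (Q M : Type) := Config Q M → Set ℕ → Config Q M → Prop

/-- The conditions that the step relation of a protocol must satisfy: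
agent conservation, agent and packet anonymity, possibility to ignore extra packets,
and possibility to add passive agents. -/
structure IsProtocolStep {Q M : Type} (Step : StepRel Q M) : Prop where
  active_subset : ∀ {C A C'}, Step C A C' → A ⊆ C.agentsDom
  agent_conservation : ∀ {C A C'}, Step C A C' → C.agentsDom = C'.agentsDom
  anonymity : ∀ (πA πP : Equiv.Perm ℕ) {C A C'}, Step C A C' →
    Step (C.rename πA πP) (πA ⁻¹' A) (C'.rename πA πP)
  ignore_packets : ∀ {C A C'} (p : ℕ) (m : M), Step C A C' →
    C.packetMsg p = none → C'.packetMsg p = none →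
    Step (C.setPacket p (some m)) A (C'.setPacket p (some m))
  add_passive : ∀ {C A C'} (a : ℕ) (q : Q), Step C A C' →
    C.agentState a = none → C'.agentState a = none →
    ∃ q' : Q, Step (C.setAgent a (some q)) A (C'.setAgent a (some q'))

/-- `C → C'` : a step from `C` to `C'` with some set of active agents. -/
def stepTo {Q M : Type} (Step : StepRel Q M) (C C' : Config Q M) : Prop := ∃ A, Step C A C'

/-- Reachability via finitely many steps. -/
def Reaches {Q M : Type} (Step : StepRel Q M) : Config Q M → Config Q M → Prop :=
  Relation.ReflTransGen (stepTo Step)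

/-- An infinite execution: at each moment either nothing changes or a single step occurs. -/
def IsExecution {Q M : Type} (Step : StepRel Q M) (E : ℕ → Config Q M) : Prop :=
  ∀ i, E (i + 1) = E i ∨ stepTo Step (E i) (E (i + 1))

/-- A finite execution of length `n`, given by the first `n + 1` values of `E`. -/
def IsFinExecution {Q M : Type} (Step : StepRel Q M) (n : ℕ) (E : ℕ → Config Q M) : Prop :=
  ∀ i < n, E (i + 1) = E i ∨ stepTo Step (E i) (E (i + 1))

/-- The default fairness condition: every configuration either becomes unreachable from
some moment on, or occurs infinitely many times in the execution. -/
def DefaultFair {Q M : Type} (Step : StepRel Q M) (E : ℕ → Config Q M) : Prop :=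
  ∀ C : Config Q M,
    (∃ n, ∀ m, n ≤ m → ¬ Reaches Step (E m) C) ∨ (∀ n, ∃ m, n ≤ m ∧ E m = C)

/-- A fairness condition is eventual if every finite execution can be continued
to an infinite execution satisfying it. -/
def Eventual {Q M : Type} (Step : StepRel Q M) (Φ : (ℕ → Config Q M) → Prop) : Prop :=
  ∀ (n : ℕ) (E : ℕ → Config Q M), IsFinExecution Step n E →
    ∃ E' : ℕ → Config Q M, (∀ i ≤ n, E' i = E i) ∧ IsExecution Step E' ∧ Φ E'

/-- A fairness condition ensures activity if whenever an execution satisfying it is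
constant from some moment on, no step leads from the final configuration to a
different configuration. -/
def EnsuresActivity {Q M : Type} (Step : StepRel Q M) (Φ : (ℕ → Config Q M) → Prop) : Prop :=
  ∀ E, IsExecution Step E → Φ E → ∀ n, (∀ m, n ≤ m → E m = E n) →
    ∀ C', stepTo Step (E n) C' → C' = E n

/-- A protocol: input mapping, individual output function, step relation
and fairness condition (the finite sets of states `Q`, messages `M` and input
letters `Sg` are type parameters). -/
structure Protocol (Q M Sg : Type) where
  Iin : Sg → Q
  out : Q → Bool
  Step : StepRel Q M
  fair : (ℕ → Config Q M) → Prop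

/-- `C` is a consensus with output value `b`. -/
def IsConsensus {Q M : Type} (out : Q → Bool) (C : Config Q M) (b : Bool) : Prop :=
  ∀ a q, C.agentState a = some q → out q = b

/-- `C` is a stable consensus with output value `b`. -/
def IsStableConsensus {Q M : Type} (Step : StepRel Q M) (out : Q → Bool)
    (C : Config Q M) (b : Bool) : Prop :=
  ∀ D, Reaches Step C D → IsConsensus out D b

/-- `C` is an input configuration for the input `x` : no packets, and for every state `q`
exactly as many agents in `q` as prescribed by `x` and the input mapping. -/
def IsInputConfig {Q M Sg : Type} [Fintype Sg] (Iin : Sg → Q) (x : Sg → ℕ)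
    (C : Config Q M) : Prop :=
  (∀ p, C.packetMsg p = none) ∧
  ∀ q : Q, C.numInState q = ∑ σ : Sg, if Iin σ = q then x σ else 0

/-- The protocol `P` implements the predicate `φ` : every fair execution from an input
configuration for `x` reaches a stable consensus with output value `φ x`. -/
def Implements {Q M Sg : Type} [Fintype Sg] (P : Protocol Q M Sg)
    (φ : (Sg → ℕ) → Bool) : Prop :=
  ∀ (x : Sg → ℕ) (C0 : Config Q M), IsInputConfig P.Iin x C0 →
    ∀ E : ℕ → Config Q M, IsExecution P.Step E → P.fair E → E 0 = C0 →
      ∃ n, IsStableConsensus P.Step P.out (E n) (φ x)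

/-- The unreliable version of a step relation: every step `C --A--> C'` additionally
allows all degraded steps `C --A--> C''` satisfying population preservation,
state preservation, message preservation, and reliance on active agents. -/
def UnrelStep {Q M : Type} (Step : StepRel Q M) : StepRel Q M := fun C A C'' =>
  Step C A C'' ∨ ∃ C', Step C A C' ∧
    C''.agentsDom = C'.agentsDom ∧
    C''.packetMsg = C'.packetMsg ∧
    (∀ a, C''.agentState a = C.agentState a ∨ C''.agentState a = C'.agentState a) ∧
    ((∀ a ∉ A, C''.agentState a = C.agentState a) ∨
      (∀ a ∈ A, C''.agentState a = C'.agentState a))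

/-- The unreliable protocol corresponding to `P`. -/
def Unreliable {Q M Sg : Type} (P : Protocol Q M Sg) : Protocol Q M Sg :=
  { P with Step := UnrelStep P.Step }

/-- A shadow extension of the execution `E` around the agent `a`, using the fresh
agent `a'` : a set of executions starting from `E 0` with the extra agent `a'` added in
the state of `a`, such that removing `a'` from any of them yields `E`, and at every
moment some execution of the set has `a` and `a'` in the same state. -/
def IsShadowExtension {Q M : Type} (Step : StepRel Q M) (E : ℕ → Config Q M)
    (a a' : ℕ) (Ext : Set (ℕ → Config Q M)) : Prop :=
  a ∈ (E 0).agentsDom ∧ a' ∉ (E 0).agentsDom ∧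
  (∀ E' ∈ Ext, IsExecution Step E' ∧ (E' 0).agentState a' = (E 0).agentState a ∧
    ∀ k, (E' k).setAgent a' none = E k) ∧
  ∀ k, ∃ E' ∈ Ext, (E' k).agentState a' = (E' k).agentState a

/-- A protocol is shadow-permitting if from every configuration there is a fair
execution having a shadow extension around every agent. -/
def ShadowPermitting {Q M Sg : Type} (P : Protocol Q M Sg) : Prop :=
  ∀ C : Config Q M, ∃ E, IsExecution P.Step E ∧ E 0 = C ∧ P.fair E ∧
    ∀ a ∈ C.agentsDom, ∃ a' ∉ C.agentsDom,
      ∃ Ext, IsShadowExtension P.Step E a a' Ext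

/-- Truncatability with constant `K` : adding a fresh agent in a state already
represented by at least `K` agents of a stable consensus yields a stable consensus. -/
def TruncatableWith {Q M : Type} (Step : StepRel Q M) (out : Q → Bool) (K : ℕ) : Prop :=
  ∀ (C : Config Q M) (b : Bool) (q : Q), IsStableConsensus Step out C b →
    K ≤ C.numInState q → ∀ a', C.agentState a' = none →
      IsStableConsensus Step out (C.setAgent a' (some q)) b

/-- The cube with lower bounds `l` and (possibly infinite) upper bounds `u`. -/
def cube {Sg : Type} (l : Sg → ℕ) (u : Sg → ℕ∞) : Set (Sg → ℕ) :=
  {x | ∀ σ, l σ ≤ x σ ∧ (x σ : ℕ∞) ≤ u σ}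

/-- A counting set is a finite union of cubes. -/
def IsCountingSet {Sg : Type} (S : Set (Sg → ℕ)) : Prop :=
  ∃ (n : ℕ) (l : Fin n → Sg → ℕ) (u : Fin n → Sg → ℕ∞), S = ⋃ j, cube (l j) (u j)

/-- A counting predicate is the membership predicate of a counting set. -/
def IsCountingPred {Sg : Type} (φ : (Sg → ℕ) → Bool) : Prop :=
  IsCountingSet {x | φ x = true}

namespace USP

variable {Q M : Type}

lemma config_ext {C D : Config Q M} (h1 : C.agentState = D.agentState)
    (h2 : C.packetMsg = D.packetMsg) : C = D := by
  cases C; cases D; simp_all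

lemma setAgent_agentState (C : Config Q M) (b : ℕ) (s : Option Q) (x : ℕ) :
    (C.setAgent b s).agentState x = if x = b then s else C.agentState x := by
  simp [Config.setAgent, Function.update_apply]

@[simp] lemma setAgent_agentState_same (C : Config Q M) (b : ℕ) (s : Option Q) :
    (C.setAgent b s).agentState b = s := by
  simp [setAgent_agentState]

lemma setAgent_agentState_ne (C : Config Q M) (b : ℕ) (s : Option Q) {x : ℕ} (h : x ≠ b) :
    (C.setAgent b s).agentState x = C.agentState x := by
  simp [setAgent_agentState, h]

@[simp] lemma setAgent_packetMsg (C : Config Q M) (b : ℕ) (s : Option Q) :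
    (C.setAgent b s).packetMsg = C.packetMsg := rfl

lemma mem_dom {C : Config Q M} {x : ℕ} : x ∈ C.agentsDom ↔ C.agentState x ≠ none := Iff.rfl

lemma not_mem_dom {C : Config Q M} {x : ℕ} : x ∉ C.agentsDom ↔ C.agentState x = none := by
  simp [Config.agentsDom]

/-- removing a freshly added agent gives back the configuration -/
lemma remove_add {C : Config Q M} {a' : ℕ} (h : C.agentState a' = none) (w : Option Q) :
    (C.setAgent a' w).setAgent a' none = C := by
  apply config_ext
  · funext x
    rcases eq_or_ne x a' with rfl | hx
    · simp [h]
    · simp [setAgent_agentState, hx]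
  · rfl

lemma rename_agentState (C : Config Q M) (πA πP : Equiv.Perm ℕ) (x : ℕ) :
    (C.rename πA πP).agentState x = C.agentState (πA x) := rfl

lemma rename_packetMsg (C : Config Q M) (πA πP : Equiv.Perm ℕ) (p : ℕ) :
    (C.rename πA πP).packetMsg p = C.packetMsg (πP p) := rfl

end USP
namespace USP

variable {Q M : Type} {Step : StepRel Q M}

/-- Eliminate an unreliable step into a base step and the degradation facts
(valid also for honest steps). -/
lemma unrel_elim {C A C''} (h : UnrelStep Step C A C'') :
    ∃ C₁, Step C A C₁ ∧ C''.agentsDom = C₁.agentsDom ∧ C''.packetMsg = C₁.packetMsg ∧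
      (∀ x, C''.agentState x = C.agentState x ∨ C''.agentState x = C₁.agentState x) ∧
      ((∀ x ∉ A, C''.agentState x = C.agentState x) ∨
        (∀ x ∈ A, C''.agentState x = C₁.agentState x)) := by
  rcases h with h | ⟨C₁, h1, h2, h3, h4, h5⟩
  · exact ⟨C'', h, rfl, rfl, fun x => Or.inr rfl, Or.inr fun x _ => rfl⟩
  · exact ⟨C₁, h1, h2, h3, h4, h5⟩

lemma unrel_dom (hP : IsProtocolStep Step) {C A C''} (h : UnrelStep Step C A C'') :
    C.agentsDom = C''.agentsDom := by
  obtain ⟨C₁, hB, hdom, -, -, -⟩ := unrel_elim h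
  rw [hdom]; exact hP.agent_conservation hB

lemma stepTo_dom (hP : IsProtocolStep Step) {C C''} (h : stepTo (UnrelStep Step) C C'') :
    C.agentsDom = C''.agentsDom := by
  obtain ⟨A, hA⟩ := h; exact unrel_dom hP hA

lemma exec_dom (hP : IsProtocolStep Step) {E : ℕ → Config Q M}
    (hE : IsExecution (UnrelStep Step) E) (k : ℕ) : (E k).agentsDom = (E 0).agentsDom := by
  induction k with
  | zero => rfl
  | succ n ih =>
    rcases hE n with h | h
    · rw [h]; exact ih
    · rw [← stepTo_dom hP h]; exact ih

/-- Freeze lemma: a fresh passive agent can be carried along any unreliable step,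
keeping its state. -/
lemma freeze_step (hP : IsProtocolStep Step) {C A C''} (h : UnrelStep Step C A C'')
    {a' : ℕ} (ha' : C.agentState a' = none) (v : Q) :
    UnrelStep Step (C.setAgent a' (some v)) A (C''.setAgent a' (some v)) := by
  obtain ⟨C₁, hB, hdom, hpkt, hper, hdisj⟩ := unrel_elim h
  have hdomB : C.agentsDom = C₁.agentsDom := hP.agent_conservation hB
  have ha'1 : C₁.agentState a' = none := by
    rw [← not_mem_dom, ← hdomB, not_mem_dom]; exact ha'
  obtain ⟨q₁, hB1⟩ := hP.add_passive a' v hB ha' ha'1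
  have hAsub : A ⊆ C.agentsDom := hP.active_subset hB
  have ha'A : a' ∉ A := fun hmem => (not_mem_dom.2 ha') (hAsub hmem)
  refine Or.inr ⟨C₁.setAgent a' (some q₁), hB1, ?_, ?_, ?_, ?_⟩
  · ext x
    rcases eq_or_ne x a' with rfl | hx
    · simp [mem_dom]
    · simp only [mem_dom, setAgent_agentState_ne _ _ _ hx]
      rw [← mem_dom, ← mem_dom, hdom]
  · simp [hpkt]
  · intro x
    rcases eq_or_ne x a' with rfl | hx
    · exact Or.inl (by simp)
    · rcases hper x with h' | h'
      · exact Or.inl (by simp [setAgent_agentState_ne _ _ _ hx, h'])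
      · exact Or.inr (by simp [setAgent_agentState_ne _ _ _ hx, h'])
  · rcases hdisj with h' | h'
    · refine Or.inl fun x hx => ?_
      rcases eq_or_ne x a' with rfl | hxa
      · simp
      · simp only [setAgent_agentState_ne _ _ _ hxa]; exact h' x hx
    · refine Or.inr fun x hx => ?_
      have hxa : x ≠ a' := fun h'' => ha'A (h'' ▸ hx)
      simp only [setAgent_agentState_ne _ _ _ hxa]; exact h' x hx

end USP
namespace USP

variable {Q M : Type} {Step : StepRel Q M}

/-- The fully suppressed variant of a step: all states kept, packets as in the target. -/
def fullsupp (X C₁ : Config Q M) : Config Q M :=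
  ⟨X.agentState, C₁.packetMsg, X.finAgents, C₁.finPackets⟩

@[simp] lemma fullsupp_agentState (X C₁ : Config Q M) :
    (fullsupp X C₁).agentState = X.agentState := rfl

@[simp] lemma fullsupp_packetMsg (X C₁ : Config Q M) :
    (fullsupp X C₁).packetMsg = C₁.packetMsg := rfl

/-- The half suppressed variant: active agents move, passive agents keep their state. -/
noncomputable def halfsupp (X C₁ : Config Q M) (A : Set ℕ) : Config Q M :=
  ⟨fun x => if x ∈ A then C₁.agentState x else X.agentState x, C₁.packetMsg, by
    apply Set.Finite.subset (X.finAgents.union C₁.finAgents)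
    intro x hx
    simp only [Set.mem_setOf_eq] at hx
    by_cases hA : x ∈ A
    · exact Or.inr (by simpa [hA] using hx)
    · exact Or.inl (by simpa [hA] using hx), C₁.finPackets⟩

lemma halfsupp_agentState (X C₁ : Config Q M) (A : Set ℕ) (x : ℕ) :
    (halfsupp X C₁ A).agentState x =
      if x ∈ A then C₁.agentState x else X.agentState x := rfl

@[simp] lemma halfsupp_packetMsg (X C₁ : Config Q M) (A : Set ℕ) :
    (halfsupp X C₁ A).packetMsg = C₁.packetMsg := rfl

/-- The fully suppressed variant is an unreliable step. -/
lemma fullsupp_step {X A C₁} (hP : IsProtocolStep Step) (hB : Step X A C₁) :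
    UnrelStep Step X A (fullsupp X C₁) := by
  refine Or.inr ⟨C₁, hB, ?_, rfl, fun x => Or.inl rfl, Or.inl fun x _ => rfl⟩
  · have := hP.agent_conservation hB
    ext x; simp only [mem_dom, fullsupp_agentState]
    rw [← mem_dom, ← mem_dom, ← this]

/-- The half suppressed variant is an unreliable step. -/
lemma halfsupp_step {X A C₁} (hP : IsProtocolStep Step) (hB : Step X A C₁) :
    UnrelStep Step X A (halfsupp X C₁ A) := by
  have hdom := hP.agent_conservation hB
  refine Or.inr ⟨C₁, hB, ?_, rfl, ?_, Or.inr fun x hx => by simp [halfsupp_agentState, hx]⟩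
  · ext x; simp only [mem_dom, halfsupp_agentState]
    by_cases hA : x ∈ A
    · simp [hA]
    · simp only [hA, if_false]
      rw [← mem_dom, ← mem_dom, ← hdom]
  · intro x
    by_cases hA : x ∈ A
    · exact Or.inr (by simp [halfsupp_agentState, hA])
    · exact Or.inl (by simp [halfsupp_agentState, hA])

/-- Renaming by the swap of `a` and its shadow fixes the extended configuration. -/
lemma swap_fix {X : Config Q M} {a a' : ℕ} {s : Q} (ha' : X.agentState a' = none)
    (hs : X.agentState a = some s) :
    (X.setAgent a' (some s)).rename (Equiv.swap a a') 1 = X.setAgent a' (some s) := by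
  have hne : a ≠ a' := fun h => by rw [h, ha'] at hs; cases hs
  apply config_ext
  · funext x
    rw [rename_agentState]
    rcases eq_or_ne x a with rfl | hxa
    · rw [Equiv.swap_apply_left]
      simp [setAgent_agentState_ne _ _ _ hne, hs]
    · rcases eq_or_ne x a' with rfl | hxa'
      · rw [Equiv.swap_apply_right]
        simp [setAgent_agentState_ne _ _ _ hne, hs]
      · rw [Equiv.swap_apply_of_ne_of_ne hxa hxa']
  · funext p; rw [rename_packetMsg]; simp

/-- Jump lemma for an active agent: from a synchronized position, the shadow can take the
suppressed transition of `a` while everybody else keeps its state. -/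
lemma jump_step_active (hP : IsProtocolStep Step) {X A C₁} (hB : Step X A C₁)
    {a a' : ℕ} {s q : Q} (haA : a ∈ A) (ha' : X.agentState a' = none)
    (hs : X.agentState a = some s) (hq : C₁.agentState a = some q) :
    stepTo (UnrelStep Step) (X.setAgent a' (some s)) ((fullsupp X C₁).setAgent a' (some q)) := by
  have hne : a ≠ a' := fun h => by rw [h, ha'] at hs; cases hs
  have hdomB := hP.agent_conservation hB
  have ha'1 : C₁.agentState a' = none := by
    rw [← not_mem_dom, ← hdomB, not_mem_dom]; exact ha'
  obtain ⟨q₁, hB1⟩ := hP.add_passive a' s hB ha' ha'1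
  have hB2 := hP.anonymity (Equiv.swap a a') 1 hB1
  rw [swap_fix ha' hs] at hB2
  set Y := (C₁.setAgent a' (some q₁)).rename (Equiv.swap a a') 1 with hY
  have hYa' : Y.agentState a' = some q := by
    rw [hY, rename_agentState, Equiv.swap_apply_right,
      setAgent_agentState_ne _ _ _ hne, hq]
  have hYa : Y.agentState a = some q₁ := by
    rw [hY, rename_agentState, Equiv.swap_apply_left]; simp
  have hYx : ∀ x, x ≠ a → x ≠ a' → Y.agentState x = C₁.agentState x := by
    intro x hxa hxa'
    rw [hY, rename_agentState, Equiv.swap_apply_of_ne_of_ne hxa hxa',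
      setAgent_agentState_ne _ _ _ hxa']
  have hYp : Y.packetMsg = C₁.packetMsg := by funext p; rw [hY, rename_packetMsg]; simp
  refine ⟨Equiv.swap a a' ⁻¹' A, Or.inr ⟨Y, hB2, ?_, ?_, ?_, ?_⟩⟩
  · ext x
    rcases eq_or_ne x a' with rfl | hxa'
    · simp [mem_dom, hYa']
    · rcases eq_or_ne x a with rfl | hxa
      · simp [mem_dom, hYa, setAgent_agentState_ne _ _ _ hne, hs]
      · simp only [mem_dom, setAgent_agentState_ne _ _ _ hxa', fullsupp_agentState,
          hYx x hxa hxa']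
        rw [← mem_dom, ← mem_dom, ← hdomB]
  · simp [hYp]
  · intro x
    rcases eq_or_ne x a' with rfl | hxa'
    · exact Or.inr (by simp [hYa'])
    · exact Or.inl (by simp [setAgent_agentState_ne _ _ _ hxa'])
  · refine Or.inl fun x hx => ?_
    rcases eq_or_ne x a' with rfl | hxa'
    · exact absurd (by rwa [Set.mem_preimage, Equiv.swap_apply_right]) hx
    · simp [setAgent_agentState_ne _ _ _ hxa']

/-- Jump lemma for a passive agent: active agents take their targets, the shadow takes
the target of `a`, while `a` and the other passive agents keep their states. -/
lemma jump_step_passive (hP : IsProtocolStep Step) {X A C₁} (hB : Step X A C₁)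
    {a a' : ℕ} {s q : Q} (haA : a ∉ A) (ha' : X.agentState a' = none)
    (hs : X.agentState a = some s) (hq : C₁.agentState a = some q) :
    stepTo (UnrelStep Step) (X.setAgent a' (some s))
      ((halfsupp X C₁ A).setAgent a' (some q)) := by
  have hne : a ≠ a' := fun h => by rw [h, ha'] at hs; cases hs
  have hdomB := hP.agent_conservation hB
  have ha'A : a' ∉ A := fun hmem => (not_mem_dom.2 ha') (hP.active_subset hB hmem)
  have ha'1 : C₁.agentState a' = none := by
    rw [← not_mem_dom, ← hdomB, not_mem_dom]; exact ha'
  obtain ⟨q₁, hB1⟩ := hP.add_passive a' s hB ha' ha'1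
  have hB2 := hP.anonymity (Equiv.swap a a') 1 hB1
  rw [swap_fix ha' hs] at hB2
  set Y := (C₁.setAgent a' (some q₁)).rename (Equiv.swap a a') 1 with hY
  have hYa' : Y.agentState a' = some q := by
    rw [hY, rename_agentState, Equiv.swap_apply_right,
      setAgent_agentState_ne _ _ _ hne, hq]
  have hYa : Y.agentState a = some q₁ := by
    rw [hY, rename_agentState, Equiv.swap_apply_left]; simp
  have hYx : ∀ x, x ≠ a → x ≠ a' → Y.agentState x = C₁.agentState x := by
    intro x hxa hxa'
    rw [hY, rename_agentState, Equiv.swap_apply_of_ne_of_ne hxa hxa',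
      setAgent_agentState_ne _ _ _ hxa']
  have hYp : Y.packetMsg = C₁.packetMsg := by funext p; rw [hY, rename_packetMsg]; simp
  have hpre : ∀ x, x ∈ Equiv.swap a a' ⁻¹' A → x ≠ a ∧ x ≠ a' ∧ x ∈ A := by
    intro x hx
    rw [Set.mem_preimage] at hx
    rcases eq_or_ne x a with rfl | hxa
    · rw [Equiv.swap_apply_left] at hx; exact absurd hx ha'A
    · rcases eq_or_ne x a' with rfl | hxa'
      · rw [Equiv.swap_apply_right] at hx; exact absurd hx haA
      · rw [Equiv.swap_apply_of_ne_of_ne hxa hxa'] at hx; exact ⟨hxa, hxa', hx⟩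
  refine ⟨Equiv.swap a a' ⁻¹' A, Or.inr ⟨Y, hB2, ?_, ?_, ?_, ?_⟩⟩
  · ext x
    rcases eq_or_ne x a' with rfl | hxa'
    · simp [mem_dom, hYa']
    · rcases eq_or_ne x a with rfl | hxa
      · simp [mem_dom, hYa, setAgent_agentState_ne _ _ _ hne, halfsupp_agentState, haA, hs]
      · simp only [mem_dom, setAgent_agentState_ne _ _ _ hxa', halfsupp_agentState,
          hYx x hxa hxa']
        by_cases hA : x ∈ A
        · simp [hA]
        · simp only [hA, if_false]
          rw [← mem_dom, ← mem_dom, ← hdomB]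
  · simp [hYp]
  · intro x
    rcases eq_or_ne x a' with rfl | hxa'
    · exact Or.inr (by simp [hYa'])
    · rcases eq_or_ne x a with rfl | hxa
      · exact Or.inl (by simp [setAgent_agentState_ne _ _ _ hne,
          halfsupp_agentState, haA])
      · by_cases hA : x ∈ A
        · exact Or.inr (by simp [setAgent_agentState_ne _ _ _ hxa',
            halfsupp_agentState, hA, hYx x hxa hxa'])
        · exact Or.inl (by simp [setAgent_agentState_ne _ _ _ hxa',
            halfsupp_agentState, hA])
  · refine Or.inr fun x hx => ?_
    obtain ⟨hxa, hxa', hxA⟩ := hpre x hx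
    simp [setAgent_agentState_ne _ _ _ hxa', halfsupp_agentState, hxA, hYx x hxa hxa']

end USP
namespace USP

variable {Q M : Type} {Step : StepRel Q M}

variable (Step) in
/-- One step of a shadow extension: either nothing at all happens, or an unreliable step. -/
def LiftStep (a' : ℕ) (E : ℕ → Config Q M) (k : ℕ) (x y : Q) : Prop :=
  (E (k+1)).setAgent a' (some y) = (E k).setAgent a' (some x) ∨
    stepTo (UnrelStep Step) ((E k).setAgent a' (some x)) ((E (k+1)).setAgent a' (some y))

variable (Step) in
/-- The shadow `a'` of `a` can be in state `w` at time `t`. -/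
def Track (a a' : ℕ) (E : ℕ → Config Q M) (t : ℕ) (w : Q) : Prop :=
  ∃ v : ℕ → Q, (E 0).agentState a = some (v 0) ∧
    (∀ k < t, LiftStep Step a' E k (v k) (v (k+1))) ∧ v t = w

lemma track_congr {a a' : ℕ} {E F : ℕ → Config Q M} {t : ℕ} {w : Q}
    (hEF : ∀ i ≤ t, E i = F i) (h : Track Step a a' E t w) : Track Step a a' F t w := by
  obtain ⟨v, hv0, hvs, hvt⟩ := h
  refine ⟨v, by rw [← hEF 0 (Nat.zero_le _)]; exact hv0, fun k hk => ?_, hvt⟩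
  have h1 := hEF k (le_of_lt hk)
  have h2 := hEF (k + 1) hk
  have := hvs k hk
  rwa [LiftStep, h1, h2] at this

lemma track_zero {a a' : ℕ} {E : ℕ → Config Q M} {s : Q}
    (h : (E 0).agentState a = some s) : Track Step a a' E 0 s :=
  ⟨fun _ => s, h, fun k hk => absurd hk (Nat.not_lt_zero k), rfl⟩

lemma track_succ_of_lift {a a' : ℕ} {E : ℕ → Config Q M} {t : ℕ} {w y : Q}
    (h : Track Step a a' E t w) (hl : LiftStep Step a' E t w y) :
    Track Step a a' E (t+1) y := by
  obtain ⟨v, hv0, hvs, hvt⟩ := h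
  refine ⟨fun m => if m ≤ t then v m else y, by simp [hv0], fun k hk => ?_, by simp⟩
  rcases Nat.lt_succ_iff_lt_or_eq.1 hk with hk' | rfl
  · simpa [le_of_lt hk', Nat.succ_le_of_lt hk'] using hvs k hk'
  · simpa [hvt] using hl

lemma track_succ_freeze (hP : IsProtocolStep Step) {a a' : ℕ} {E : ℕ → Config Q M}
    {t : ℕ} {w : Q} (h : Track Step a a' E t w)
    (hstep : E (t+1) = E t ∨ stepTo (UnrelStep Step) (E t) (E (t+1)))
    (ha' : (E t).agentState a' = none) : Track Step a a' E (t+1) w := by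
  refine track_succ_of_lift h ?_
  rcases hstep with h' | ⟨A, hA⟩
  · exact Or.inl (by rw [h'])
  · exact Or.inr ⟨A, freeze_step hP hA ha' w⟩

lemma track_mono (hP : IsProtocolStep Step) {a a' : ℕ} {E : ℕ → Config Q M}
    {t t' : ℕ} (h : Track Step a a' E t w)
    (hsteps : ∀ m, t ≤ m → m < t' →
      (E (m+1) = E m ∨ stepTo (UnrelStep Step) (E m) (E (m+1))))
    (ha' : ∀ m, (E m).agentState a' = none) (htt : t ≤ t') : Track Step a a' E t' w := by
  induction t' with
  | zero => rwa [Nat.le_zero.1 htt] at h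
  | succ n ih =>
    rcases eq_or_lt_of_le htt with rfl | hlt
    · exact h
    · have hn : t ≤ n := Nat.lt_succ_iff.1 hlt
      exact track_succ_freeze hP
        (ih (fun m hm hm' => hsteps m hm (Nat.lt_succ_of_lt hm')) hn)
        (hsteps n hn (Nat.lt_succ_self n)) (ha' n)

end USP
namespace USP

variable {Q M : Type} {Step : StepRel Q M}

/-- Agent `a` changes its state to `q` at step `k`. -/
def IsChange (a : ℕ) (E : ℕ → Config Q M) (k : ℕ) (q : Q) : Prop :=
  (E (k+1)).agentState a = some q ∧ (E k).agentState a ≠ some q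

lemma reach_current (hP : IsProtocolStep Step) {a a' : ℕ} {E : ℕ → Config Q M}
    (hE : IsExecution (UnrelStep Step) E)
    (ha' : ∀ m, (E m).agentState a' = none)
    (ha : ∀ m, (E m).agentState a ≠ none)
    {T : ℕ} (hgood : ∀ m < T, ∀ q, IsChange a E m q → Track Step a a' E m q) :
    ∀ t ≤ T, ∃ s, (E t).agentState a = some s ∧ Track Step a a' E t s := by
  intro t
  induction t with
  | zero =>
    intro _
    obtain ⟨s, hs⟩ := Option.ne_none_iff_exists'.1 (ha 0)
    exact ⟨s, hs, track_zero hs⟩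
  | succ n ih =>
    intro hn
    obtain ⟨s, hs, htr⟩ := ih (le_of_lt (Nat.lt_of_succ_le hn))
    obtain ⟨s', hs'⟩ := Option.ne_none_iff_exists'.1 (ha (n+1))
    by_cases hsame : (E (n+1)).agentState a = some s
    · exact ⟨s, hsame, track_succ_freeze hP htr (hE n) (ha' n)⟩
    · have hch : IsChange a E n s' := by
        refine ⟨hs', fun hcon => hsame ?_⟩
        rw [hs] at hcon
        rw [hs', ← hcon]
      have := hgood n (Nat.lt_of_succ_le hn) s' hch
      exact ⟨s', hs', track_succ_freeze hP this (hE n) (ha' n)⟩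

lemma shadow_of_good (hP : IsProtocolStep Step) {a a' : ℕ} {E : ℕ → Config Q M}
    (hE : IsExecution (UnrelStep Step) E)
    (ha' : ∀ m, (E m).agentState a' = none)
    (ha : ∀ m, (E m).agentState a ≠ none)
    (hgood : ∀ m, ∀ q, IsChange a E m q → Track Step a a' E m q) :
    IsShadowExtension (UnrelStep Step) E a a'
      {G | IsExecution (UnrelStep Step) G ∧ (G 0).agentState a' = (E 0).agentState a ∧
        ∀ k, (G k).setAgent a' none = E k} := by
  refine ⟨mem_dom.2 (ha 0), not_mem_dom.2 (ha' 0), fun G hG => hG, fun k => ?_⟩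
  have hane : a ≠ a' := fun h => (ha 0) (h ▸ ha' 0)
  obtain ⟨s, hs, v, hv0, hvs, hvk⟩ :=
    reach_current hP hE ha' ha (fun m _ q hq => hgood m q hq) k (le_refl k)
  refine ⟨fun m => (E m).setAgent a' (some (v (min m k))), ⟨?_, ?_, ?_⟩, ?_⟩
  · intro m
    dsimp only
    rcases lt_or_ge m k with hm | hm
    · have h1 : min m k = m := min_eq_left (le_of_lt hm)
      have h2 : min (m+1) k = m + 1 := min_eq_left (Nat.succ_le_of_lt hm)
      rw [h1, h2]
      exact hvs m hm
    · have h1 : min m k = k := min_eq_right hm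
      have h2 : min (m+1) k = k := min_eq_right (le_trans hm (Nat.le_succ m))
      rw [h1, h2]
      rcases hE m with h' | ⟨A, hA⟩
      · exact Or.inl (by rw [h'])
      · exact Or.inr ⟨A, freeze_step hP hA (ha' m) _⟩
  · simp only [Nat.zero_min, setAgent_agentState_same]
    exact hv0.symm
  · intro m
    exact remove_add (ha' m) _
  · dsimp only
    rw [min_self, setAgent_agentState_same, setAgent_agentState_ne _ _ _ hane, hs, hvk]

end USP
namespace USP

variable {Q M : Type} [Fintype Q] {Step : StepRel Q M} {Φ : (ℕ → Config Q M) → Prop}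

noncomputable def allPairs (C : Config Q M) : Finset (ℕ × Q) :=
  C.finAgents.toFinset ×ˢ Finset.univ

lemma mem_allPairs {C : Config Q M} {p : ℕ × Q} :
    p ∈ allPairs C ↔ p.1 ∈ C.agentsDom := by
  simp [allPairs, Finset.mem_product, Set.Finite.mem_toFinset, Config.agentsDom]

variable (Step) in
noncomputable def Inst (C : Config Q M) (a' n : ℕ) (F : ℕ → Config Q M) : Finset (ℕ × Q) :=
  (allPairs C).filter fun p => Track Step p.1 a' F n p.2

variable (Step) in
/-- A good prefix: all state changes are pre-installed. -/
def GoodPrefix (C : Config Q M) (a' n : ℕ) (F : ℕ → Config Q M) : Prop :=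
  ∀ k < n, ∀ b q, b ∈ C.agentsDom → IsChange b F k q → Track Step b a' F k q

lemma build_prefix (hP : IsProtocolStep Step)
    {C : Config Q M} {a' : ℕ} (ha'C : C.agentState a' = none)
    {n : ℕ} {F E : ℕ → Config Q M}
    (hEF : ∀ i ≤ n, E i = F i) (hEexec : IsExecution (UnrelStep Step) E)
    (hE0 : E 0 = C)
    {K : ℕ} (hKn : n ≤ K)
    (hKmin : ∀ m < K, ∀ b q, b ∈ C.agentsDom → IsChange b E m q → Track Step b a' E m q)
    {b₀ : ℕ} {q₀ : Q} (hb₀D : b₀ ∈ C.agentsDom)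
    (hntr₀ : ¬ Track Step b₀ a' E K q₀)
    {TGT : Config Q M} {A : Set ℕ}
    (hTstep : UnrelStep Step (E K) A TGT)
    (ha'T : TGT.agentState a' = none)
    (hTgood : ∀ b q, b ∈ C.agentsDom → TGT.agentState b = some q →
        (E K).agentState b ≠ some q → Track Step b a' E K q)
    (hjump : ∀ s₀, (E K).agentState b₀ = some s₀ →
        stepTo (UnrelStep Step) ((E K).setAgent a' (some s₀)) (TGT.setAgent a' (some q₀))) :
    ∃ n' F', IsFinExecution (UnrelStep Step) n' F' ∧ F' 0 = C ∧
      GoodPrefix Step C a' n' F' ∧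
      (Inst Step C a' n F).card < (Inst Step C a' n' F').card := by
  have hdomE : ∀ m, (E m).agentsDom = C.agentsDom := by
    intro m; rw [exec_dom hP hEexec m, hE0]
  have ha'E : ∀ m, (E m).agentState a' = none := by
    intro m; rw [← not_mem_dom, hdomE m, not_mem_dom]; exact ha'C
  set F' : ℕ → Config Q M := fun i => if i ≤ K then E i else TGT with hF'def
  have hF'le : ∀ i ≤ K, F' i = E i := fun i hi => by simp [hF'def, hi]
  have hF'K1 : F' (K + 1) = TGT := by simp [hF'def]
  have hfin' : IsFinExecution (UnrelStep Step) (K + 1) F' := by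
    intro i hi
    rcases Nat.lt_succ_iff_lt_or_eq.1 hi with hi' | rfl
    · rw [hF'le i (le_of_lt hi'), hF'le (i+1) (Nat.succ_le_of_lt hi')]
      exact hEexec i
    · rw [hF'le i (le_refl i), hF'K1]
      exact Or.inr ⟨A, hTstep⟩
  have ha'F' : ∀ m, (F' m).agentState a' = none := by
    intro m
    by_cases hm : m ≤ K
    · rw [hF'le m hm]; exact ha'E m
    · simp only [hF'def, hm, if_false]; exact ha'T
  have hb₀ne : ∀ m, (E m).agentState b₀ ≠ none := by
    intro m; rw [← mem_dom, hdomE m]; exact hb₀D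
  obtain ⟨s₀, hs₀, htr₀⟩ :=
    reach_current hP hEexec ha'E hb₀ne
      (fun m hm q hq => hKmin m hm b₀ q hb₀D hq) K (le_refl K)
  -- transfers
  have hEtoF' : ∀ t, t ≤ K → ∀ b w, Track Step b a' E t w → Track Step b a' F' t w := by
    intro t ht b w h
    exact track_congr (fun i hi => (hF'le i (le_trans hi ht)).symm) h
  have hgood' : GoodPrefix Step C a' (K + 1) F' := by
    intro k hk b q hb hch
    rcases Nat.lt_succ_iff_lt_or_eq.1 hk with hk' | heq
    · have hchE : IsChange b E k q := by
        have h1 := hF'le k (le_of_lt hk')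
        have h2 := hF'le (k+1) (Nat.succ_le_of_lt hk')
        exact ⟨by rw [← h2]; exact hch.1, by rw [← h1]; exact hch.2⟩
      exact hEtoF' k (le_of_lt hk') _ _ (hKmin k hk' b q hb hchE)
    · subst heq
      have h1 : TGT.agentState b = some q := by rw [← hF'K1]; exact hch.1
      have h2 : (E k).agentState b ≠ some q := by
        rw [← hF'le k (le_refl k)]; exact hch.2
      exact hEtoF' k (le_refl k) _ _ (hTgood b q hb h1 h2)
  have hsub : Inst Step C a' n F ⊆ Inst Step C a' (K+1) F' := by
    intro p hp
    rw [Inst, Finset.mem_filter] at hp ⊢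
    refine ⟨hp.1, ?_⟩
    have h1 : Track Step p.1 a' E n p.2 :=
      track_congr (fun i hi => (hEF i hi).symm) hp.2
    have h2 : Track Step p.1 a' E K p.2 :=
      track_mono hP h1 (fun m _ _ => hEexec m) ha'E hKn
    exact track_succ_freeze hP (hEtoF' K (le_refl K) _ _ h2)
      (hfin' K (Nat.lt_succ_self K)) (ha'F' K)
  have hnew : (b₀, q₀) ∈ Inst Step C a' (K+1) F' := by
    rw [Inst, Finset.mem_filter]
    refine ⟨mem_allPairs.2 hb₀D, ?_⟩
    refine track_succ_of_lift (hEtoF' K (le_refl K) _ _ htr₀) (Or.inr ?_)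
    rw [hF'le K (le_refl K), hF'K1]
    exact hjump s₀ hs₀
  have hnotold : (b₀, q₀) ∉ Inst Step C a' n F := by
    intro hmem
    rw [Inst, Finset.mem_filter] at hmem
    have h1 : Track Step b₀ a' E n q₀ :=
      track_congr (fun i hi => (hEF i hi).symm) hmem.2
    exact hntr₀ (track_mono hP h1 (fun m _ _ => hEexec m) ha'E hKn)
  exact ⟨K + 1, F', hfin', by rw [hF'le 0 (Nat.zero_le K)]; exact hE0, hgood',
    Finset.card_lt_card ((Finset.ssubset_iff_of_subset hsub).2 ⟨(b₀, q₀), hnew, hnotold⟩)⟩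

end USP
namespace USP

variable {Q M : Type} [Fintype Q] {Step : StepRel Q M} {Φ : (ℕ → Config Q M) → Prop}

/-- The core stage lemma: either the fair extension of a good prefix has all its
changes pre-installed, or there is a strictly better good prefix. -/
lemma stage_lemma (hP : IsProtocolStep Step) (hEv : Eventual (UnrelStep Step) Φ)
    {C : Config Q M} {a' : ℕ} (ha'C : C.agentState a' = none)
    {n : ℕ} {F : ℕ → Config Q M} (hF : IsFinExecution (UnrelStep Step) n F)
    (hF0 : F 0 = C) (hgoodF : GoodPrefix Step C a' n F) :
    (∃ E, IsExecution (UnrelStep Step) E ∧ E 0 = C ∧ Φ E ∧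
      ∀ m b q, b ∈ C.agentsDom → IsChange b E m q → Track Step b a' E m q) ∨
    (∃ n' F', IsFinExecution (UnrelStep Step) n' F' ∧ F' 0 = C ∧
      GoodPrefix Step C a' n' F' ∧
      (Inst Step C a' n F).card < (Inst Step C a' n' F').card) := by
  obtain ⟨E, hEF, hEexec, hfair⟩ := hEv n F hF
  have hE0 : E 0 = C := by rw [hEF 0 (Nat.zero_le n), hF0]
  have hdomE : ∀ m, (E m).agentsDom = C.agentsDom := by
    intro m; rw [exec_dom hP hEexec m, hE0]
  have ha'E : ∀ m, (E m).agentState a' = none := by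
    intro m; rw [← not_mem_dom, hdomE m, not_mem_dom]; exact ha'C
  by_cases hGood : ∀ m b q, b ∈ C.agentsDom → IsChange b E m q → Track Step b a' E m q
  · exact Or.inl ⟨E, hEexec, hE0, hfair, hGood⟩
  right
  have hex : ∃ k, ∃ b q, b ∈ C.agentsDom ∧ IsChange b E k q ∧ ¬ Track Step b a' E k q := by
    push_neg at hGood
    obtain ⟨m, b, q, hb, hch, hnt⟩ := hGood
    exact ⟨m, b, q, hb, hch, hnt⟩
  set K := Nat.find hex with hKdef
  obtain ⟨b₀, q₀, hb₀D, hch₀, hntr₀⟩ := Nat.find_spec hex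
  have hKmin : ∀ m < K, ∀ b q, b ∈ C.agentsDom → IsChange b E m q →
      Track Step b a' E m q := by
    intro m hm b q hb hch
    by_contra hnt
    exact Nat.find_min hex hm ⟨b, q, hb, hch, hnt⟩
  have hKn : n ≤ K := by
    by_contra hlt
    push_neg at hlt
    refine hntr₀ ?_
    have h1 : ∀ i ≤ K + 1, F i = E i := fun i hi =>
      (hEF i (le_trans hi (Nat.succ_le_of_lt hlt))).symm
    have hchF : IsChange b₀ F K q₀ := by
      refine ⟨?_, ?_⟩
      · rw [h1 (K+1) (le_refl _)]; exact hch₀.1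
      · rw [h1 K (Nat.le_succ K)]; exact hch₀.2
    have := hgoodF K hlt b₀ q₀ hb₀D hchF
    exact track_congr (fun i hi => h1 i (le_trans hi (Nat.le_succ K))) this
  have hEne : E (K + 1) ≠ E K := by
    intro hcon
    exact hch₀.2 (by rw [← hcon]; exact hch₀.1)
  obtain ⟨A, hA⟩ : stepTo (UnrelStep Step) (E K) (E (K + 1)) := by
    rcases hEexec K with h | h
    · exact absurd h hEne
    · exact h
  obtain ⟨C₁, hB, hdomeq, hpkteq, hper, hdisj⟩ := unrel_elim hA
  have hAD : A ⊆ C.agentsDom := by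
    rw [← hdomE K]; exact hP.active_subset hB
  have ha'A : a' ∉ A := fun hmem => (not_mem_dom.2 ha'C) (hAD hmem)
  have hC₁a' : C₁.agentState a' = none := by
    rw [← not_mem_dom, ← hP.agent_conservation hB, not_mem_dom]
    exact ha'E K
  by_cases hact : ∃ b q, b ∈ A ∧ IsChange b E K q ∧ ¬ Track Step b a' E K q
  · -- a bad change by an active agent: install it via the fully suppressed variant
    obtain ⟨b, q, hbA, hch, hntr⟩ := hact
    have hbD : b ∈ C.agentsDom := hAD hbA
    have hq1 : C₁.agentState b = some q := by
      rcases hper b with h | h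
      · exact absurd (by rw [← h]; exact hch.1) hch.2
      · rw [← h]; exact hch.1
    refine build_prefix hP ha'C hEF hEexec hE0 hKn hKmin hbD hntr
      (TGT := fullsupp (E K) C₁) (fullsupp_step hP hB) (ha'E K) ?_ ?_
    · intro b' q' _ h1 h2
      exact absurd h1 h2
    · intro s₀ hs₀
      exact jump_step_active hP hB hbA (ha'E K) hs₀ hq1
  · -- all bad changes at K are by passive agents
    have hb₀A : b₀ ∉ A := fun h => hact ⟨b₀, q₀, h, hch₀, hntr₀⟩
    have hii : ∀ x ∈ A, (E (K+1)).agentState x = C₁.agentState x := by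
      rcases hdisj with h | h
      · exact absurd (by rw [← h b₀ hb₀A]; exact hch₀.1) hch₀.2
      · exact h
    have hq₀1 : C₁.agentState b₀ = some q₀ := by
      rcases hper b₀ with h | h
      · exact absurd (by rw [← h]; exact hch₀.1) hch₀.2
      · rw [← h]; exact hch₀.1
    refine build_prefix hP ha'C hEF hEexec hE0 hKn hKmin hb₀D hntr₀
      (TGT := halfsupp (E K) C₁ A) (halfsupp_step hP hB) ?_ ?_ ?_
    · rw [halfsupp_agentState]
      by_cases hA' : a' ∈ A
      · simp [hA', hC₁a']
      · simp [hA', ha'E K]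
    · intro b' q' hb' h1 h2
      rw [halfsupp_agentState] at h1
      by_cases hbA' : b' ∈ A
      · rw [if_pos hbA'] at h1
        have hch' : IsChange b' E K q' := ⟨by rw [hii b' hbA']; exact h1, h2⟩
        by_contra hnt
        exact hact ⟨b', q', hbA', hch', hnt⟩
      · rw [if_neg hbA'] at h1
        exact absurd h1 h2
    · intro s₀ hs₀
      exact jump_step_passive hP hB hb₀A (ha'E K) hs₀ hq₀1

end USP
namespace USP

variable {Q M : Type} [Fintype Q] {Step : StepRel Q M} {Φ : (ℕ → Config Q M) → Prop}

lemma main_rec (hP : IsProtocolStep Step) (hEv : Eventual (UnrelStep Step) Φ)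
    {C : Config Q M} {a' : ℕ} (ha'C : C.agentState a' = none) :
    ∀ (d n : ℕ) (F : ℕ → Config Q M), IsFinExecution (UnrelStep Step) n F → F 0 = C →
      GoodPrefix Step C a' n F →
      (allPairs C).card - (Inst Step C a' n F).card ≤ d →
      ∃ E, IsExecution (UnrelStep Step) E ∧ E 0 = C ∧ Φ E ∧
        ∀ m b q, b ∈ C.agentsDom → IsChange b E m q → Track Step b a' E m q := by
  intro d
  induction d with
  | zero =>
    intro n F hF hF0 hgood hcard
    rcases stage_lemma hP hEv ha'C hF hF0 hgood with h | ⟨n', F', h1, h2, h3, hlt⟩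
    · exact h
    · exfalso
      have hle : (Inst Step C a' n' F').card ≤ (allPairs C).card :=
        Finset.card_le_card (Finset.filter_subset _ _)
      omega
  | succ d ih =>
    intro n F hF hF0 hgood hcard
    rcases stage_lemma hP hEv ha'C hF hF0 hgood with h | ⟨n', F', h1, h2, h3, hlt⟩
    · exact h
    · refine ih n' F' h1 h2 h3 ?_
      have hle : (Inst Step C a' n' F').card ≤ (allPairs C).card :=
        Finset.card_le_card (Finset.filter_subset _ _)
      omega

end USP

private theorem unreliable_shadow_permitting_aux {Q M Sg : Type} [Fintype Q] [Nonempty Q] [Fintype M]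
    [Fintype Sg] [Nonempty Sg] (P : Protocol Q M Sg) (hP : IsProtocolStep P.Step)
    (hEv : Eventual (UnrelStep P.Step) P.fair)
    (hAct : EnsuresActivity (UnrelStep P.Step) P.fair) :
    ShadowPermitting (Unreliable P) := by
  intro C
  obtain ⟨a', ha'⟩ : ∃ a', a' ∉ C.agentsDom := by
    obtain ⟨a', ha'⟩ := (C.finAgents.infinite_compl).nonempty
    exact ⟨a', ha'⟩
  have ha'C : C.agentState a' = none := USP.not_mem_dom.1 ha'
  obtain ⟨E, hexec, hE0, hfair, hgood⟩ :=
    USP.main_rec (Step := P.Step) (Φ := P.fair) hP hEv ha'C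
      ((USP.allPairs C).card) 0 (fun _ => C)
      (fun i hi => absurd hi (Nat.not_lt_zero i)) rfl
      (fun k hk => absurd hk (Nat.not_lt_zero k)) (Nat.sub_le _ _)
  have hdomE : ∀ m, (E m).agentsDom = C.agentsDom := by
    intro m; rw [USP.exec_dom hP hexec m, hE0]
  have ha'E : ∀ m, (E m).agentState a' = none := by
    intro m; rw [← USP.not_mem_dom, hdomE m, USP.not_mem_dom]; exact ha'C
  refine ⟨E, hexec, hE0, hfair, ?_⟩
  intro a ha
  refine ⟨a', ha', _, USP.shadow_of_good hP hexec ha'E ?_ ?_⟩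
  · intro m
    rw [← USP.mem_dom, hdomE m]
    exact ha
  · intro m q hch
    exact hgood m a q ha hch

/-- Every unreliable protocol is shadow-permitting: if the fairness condition of `P` is
eventual and ensures activity with respect to the unreliable step relation, then the
unreliable protocol corresponding to `P` is shadow-permitting. -/
theorem unreliable_shadow_permitting {Q M Sg : Type} [Fintype Q] [Nonempty Q] [Fintype M]
    [Fintype Sg] [Nonempty Sg] (P : Protocol Q M Sg) (hP : IsProtocolStep P.Step)
    (hEv : Eventual (UnrelStep P.Step) P.fair)
    (hAct : EnsuresActivity (UnrelStep P.Step) P.fair) :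
    ShadowPermitting (Unreliable P) := by
  exact unreliable_shadow_permitting_aux P hP hEv hAct
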